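/- Let a, b, c be pairwise distinct real numbers and let α ≠ 0 and β ≠ 0. Then R_{α,β,0} = { (x, βx/(2(a−b)x+α), 0) : x ∈ ℝ, 2(a−b)x+α ≠ 0 } ∪ { (−α/(2(a−c)), −β/(2(b−c)), z) : z ∈ ℝ }, and these two sets intersect in exactly one point, namely (−α/(2(a−c)), −β/(2(b−c)), 0). -/

import Mathlib

open Matrix Module Submodule

lemma rank_le_one_iff_minors (M : Matrix (Fin 2) (Fin 3) ℝ) :
    M.rank ≤ 1 ↔ ∀ i j : Fin 3, M 0 i * M 1 j = M 0 j * M 1 i := by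
  rw [Matrix.rank_eq_finrank_span_cols]
  constructor
  · intro h i j
    obtain ⟨v₀, hv₀⟩ := finrank_le_one_iff.mp h
    obtain ⟨ri, hri⟩ := hv₀ ⟨Mᵀ i, subset_span ⟨i, rfl⟩⟩
    obtain ⟨rj, hrj⟩ := hv₀ ⟨Mᵀ j, subset_span ⟨j, rfl⟩⟩
    have hi : Mᵀ i = ri • (v₀ : Fin 2 → ℝ) := congrArg Subtype.val hri.symm
    have hj : Mᵀ j = rj • (v₀ : Fin 2 → ℝ) := congrArg Subtype.val hrj.symm
    have h0i : M 0 i = ri * (v₀ : Fin 2 → ℝ) 0 := congrFun hi 0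
    have h1i : M 1 i = ri * (v₀ : Fin 2 → ℝ) 1 := congrFun hi 1
    have h0j : M 0 j = rj * (v₀ : Fin 2 → ℝ) 0 := congrFun hj 0
    have h1j : M 1 j = rj * (v₀ : Fin 2 → ℝ) 1 := congrFun hj 1
    rw [h0i, h1i, h0j, h1j]; ring
  · intro h
    by_cases hz : ∃ k, Mᵀ k ≠ 0
    · obtain ⟨k, hk⟩ := hz
      have hle : span ℝ (Set.range Mᵀ) ≤ span ℝ {Mᵀ k} := by
        rw [span_le]
        rintro _ ⟨j, rfl⟩
        rw [SetLike.mem_coe, mem_span_singleton]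
        rcases (or_iff_not_imp_left.mpr (by simpa [funext_iff, Fin.forall_fin_two, not_imp_not] using hk) :
            M 0 k ≠ 0 ∨ M 1 k ≠ 0) with h0 | h1
        · refine ⟨M 0 j / M 0 k, funext fun i => ?_⟩
          fin_cases i
          · simp [div_mul_cancel₀, h0, Matrix.transpose_apply]
          · have := h k j
            simp only [Pi.smul_apply, smul_eq_mul, Matrix.transpose_apply, Fin.mk_one, Fin.zero_eta, Fin.isValue]
            field_simp [Matrix.transpose_apply]
            linarith [h k j]
        · refine ⟨M 1 j / M 1 k, funext fun i => ?_⟩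
          fin_cases i
          · simp only [Pi.smul_apply, smul_eq_mul, Matrix.transpose_apply, Fin.mk_one, Fin.zero_eta, Fin.isValue]
            field_simp [Matrix.transpose_apply]
            linarith [h k j]
          · simp [div_mul_cancel₀, h1, Matrix.transpose_apply]
      calc finrank ℝ (span ℝ (Set.range Mᵀ)) ≤ finrank ℝ (span ℝ {Mᵀ k}) :=
            Submodule.finrank_mono hle
        _ = 1 := finrank_span_singleton hk
    · push_neg at hz
      have : Set.range Mᵀ ⊆ {0} := by rintro _ ⟨k, rfl⟩; simp [hz k]
      calc finrank ℝ (span ℝ (Set.range Mᵀ)) ≤ finrank ℝ (span ℝ ({0} : Set (Fin 2 → ℝ))) :=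
            Submodule.finrank_mono (span_mono this)
        _ ≤ 1 := by rw [span_zero_singleton]; simp
lemma minors_iff (p q r x y z : ℝ) :
    (∀ i j : Fin 3, (!![p,q,r;x,y,z] : Matrix (Fin 2) (Fin 3) ℝ) 0 i * !![p,q,r;x,y,z] 1 j
       = !![p,q,r;x,y,z] 0 j * !![p,q,r;x,y,z] 1 i) ↔
    (p*y = q*x ∧ p*z = r*x ∧ q*z = r*y) := by
  constructor
  · intro h
    exact ⟨by simpa using h 0 1, by simpa using h 0 2, by simpa using h 1 2⟩
  · rintro ⟨h1, h2, h3⟩ i j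
    fin_cases i <;> fin_cases j <;> simp <;> linarith

/-- For pairwise distinct `a b c` and `α ≠ 0`, `β ≠ 0`, the set
`R_{α,β,0}` is the union of a curve in the plane `z = 0` and a vertical line, and
these two pieces intersect in exactly the single point
`(−α/(2(a−c)), −β/(2(b−c)), 0)`. -/
theorem stmt_7 (a b c α β : ℝ) (hab : a ≠ b) (hbc : b ≠ c) (hac : a ≠ c)
    (hα : α ≠ 0) (hβ : β ≠ 0) :
    ({p : ℝ × ℝ × ℝ |
        (!![2*a*p.1 + α, 2*b*p.2.1 + β, 2*c*p.2.2; p.1, p.2.1, p.2.2] :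
          Matrix (Fin 2) (Fin 3) ℝ).rank ≤ 1} =
      {q : ℝ × ℝ × ℝ | ∃ x : ℝ, 2*(a-b)*x + α ≠ 0 ∧
          q = (x, β*x / (2*(a-b)*x + α), 0)} ∪
      {q : ℝ × ℝ × ℝ | ∃ z : ℝ, q = (-α / (2*(a-c)), -β / (2*(b-c)), z)}) ∧
    ({q : ℝ × ℝ × ℝ | ∃ x : ℝ, 2*(a-b)*x + α ≠ 0 ∧
          q = (x, β*x / (2*(a-b)*x + α), 0)} ∩
      {q : ℝ × ℝ × ℝ | ∃ z : ℝ, q = (-α / (2*(a-c)), -β / (2*(b-c)), z)} =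
      {(-α / (2*(a-c)), -β / (2*(b-c)), 0)}) := by
  have hac2 : (2:ℝ)*(a-c) ≠ 0 := by
    intro h; exact hac (by linarith [(by linarith : a - c = 0)])
  have hbc2 : (2:ℝ)*(b-c) ≠ 0 := by
    intro h; exact hbc (by linarith [(by linarith : b - c = 0)])
  set x₀ : ℝ := -α / (2*(a-c)) with hx₀
  set y₀ : ℝ := -β / (2*(b-c)) with hy₀
  have hx₀' : 2*(a-c)*x₀ = -α := by rw [hx₀]; field_simp
  have hy₀' : 2*(b-c)*y₀ = -β := by rw [hy₀]; field_simp
  have hden₀ : 2*(a-b)*x₀ + α ≠ 0 := by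
    intro h
    have h2 : α * (b - c) = 0 := by linear_combination (a-c)*h - (a-b)*hx₀'
    rcases mul_eq_zero.mp h2 with h' | h'
    · exact hα h'
    · exact hbc (by linarith)
  have hy₀'' : β * x₀ / (2*(a-b)*x₀ + α) = y₀ := by
    rw [div_eq_iff hden₀]
    linear_combination (-y₀)*hx₀' + x₀*hy₀'
  constructor
  · ext ⟨x, y, z⟩
    rw [Set.mem_setOf_eq, rank_le_one_iff_minors, minors_iff]
    constructor
    · rintro ⟨E1, E2, E3⟩
      simp only at E1 E2 E3
      by_cases hz : z = 0
      · left
        have hden : 2*(a-b)*x + α ≠ 0 := by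
          intro hden
          have hx : β * x = 0 := by linear_combination -E1 + y*hden
          rcases mul_eq_zero.mp hx with h' | h'
          · exact hβ h'
          · exact hα (by rw [h'] at hden; linarith)
        refine ⟨x, hden, ?_⟩
        have hy : y = β * x / (2*(a-b)*x + α) := by
          rw [eq_div_iff hden]; linear_combination E1
        simp [Prod.ext_iff, hy, hz]
      · right
        refine ⟨z, ?_⟩
        have hx : x = x₀ := by
          rw [hx₀, eq_div_iff hac2]
          have h1 : (2*(a-c)*x + α) * z = 0 * z := by linear_combination E2
          have := mul_right_cancel₀ hz h1
          linarith
        have hy : y = y₀ := by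
          rw [hy₀, eq_div_iff hbc2]
          have h1 : (2*(b-c)*y + β) * z = 0 * z := by linear_combination E3
          have := mul_right_cancel₀ hz h1
          linarith
        simp [Prod.ext_iff, hx, hy]
    · rintro (⟨x', hden, heq⟩ | ⟨z', heq⟩)
      · obtain ⟨h1, h2, h3⟩ : x = x' ∧ y = β * x' / (2*(a-b)*x' + α) ∧ z = 0 := by
          simpa [Prod.ext_iff] using heq
        subst h1; subst h2; subst h3
        refine ⟨?_, by ring, by ring⟩
        linear_combination (β*x) * mul_inv_cancel₀ hden
      · obtain ⟨h1, h2, h3⟩ : x = x₀ ∧ y = y₀ ∧ z = z' := by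
          simpa [Prod.ext_iff] using heq
        subst h1; subst h2; subst h3
        refine ⟨?_, ?_, ?_⟩
        · linear_combination y₀*hx₀' - x₀*hy₀'
        · linear_combination z*hx₀'
        · linear_combination z*hy₀'
  · ext q
    simp only [Set.mem_inter_iff, Set.mem_setOf_eq, Set.mem_singleton_iff]
    constructor
    · rintro ⟨⟨x', hden, heq⟩, ⟨z', rfl⟩⟩
      have h3 : z' = 0 := by
        have := congrArg (fun p : ℝ × ℝ × ℝ => p.2.2) heq
        simpa using this
      rw [h3]
    · rintro rfl
      exact ⟨⟨x₀, hden₀, by rw [hy₀'']⟩, ⟨0, rfl⟩⟩
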